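/- Let K be a field of characteristic 2 with Tits endomorphism θ (θ² = Frobenius) and θ-invariant real valuation ν (ν(x^θ) = √2 ν(x)). On K × K define the group operation (s,t)*(u,v) = (s + u + t^θ v, t + v) and the norm R(s,t) = t^{θ+2} + st + s^θ. Then ν(R((s,t)*(u,v))) ≥ min{ν(R(s,t)), ν(R(u,v))} for all (s,t), (u,v) ∈ K × K (with ν(0) = +∞). -/

import Mathlib

section Aux

private lemma ereal_coe_min (a b : ℝ) : ((min a b : ℝ) : EReal) = min (a:EReal) (b:EReal) := by
  rcases le_total a b with h | h <;>
    simp [min_eq_left, min_eq_right, h, EReal.coe_le_coe_iff]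

/- Real arithmetic helpers with `q = √2`, `q² = 2`. -/

private lemma raux1 (q a b : ℝ) (hq : q * q = 2) (hq0 : 0 < q)
    (h : a + b < q * b + (b + b)) : q * a < q * b + (b + b) := by
  have key : a < q * b + b := by linarith
  have e := mul_lt_mul_of_pos_left key hq0
  have e2 : q * (q * b + b) = q * b + (b + b) := by linear_combination b * hq
  linarith

private lemma raux2 (q a b : ℝ) (hq : q * q = 2) (hq0 : 0 < q)
    (h : a + b < q * a) : q * b + (b + b) < q * a := by
  have e1 := mul_lt_mul_of_pos_left h hq0
  rw [mul_add] at e1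
  have e1' : q * (q * a) = 2 * a := by linear_combination a * hq
  rw [e1'] at e1
  have key : q * b + b < a := by linarith
  have e2 := mul_lt_mul_of_pos_left key hq0
  have e2' : q * (q * b + b) = q * b + (b + b) := by linear_combination b * hq
  linarith

private lemma rmin (q a b : ℝ) (hq : q * q = 2) (hq0 : 0 < q) :
    min (q * a) (q * b + (b + b)) ≤ a + b := by
  by_contra h
  push_neg at h
  rw [lt_min_iff] at h
  exact absurd (raux2 q a b hq hq0 h.1) (raux1 q a b hq hq0 h.2).asymm

variable {K : Type*} [Field K] [CharP K 2]

/-- If `ν y < ν x` then `ν (x + y) = ν y` (char 2: `x + y + x = y`). -/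
private lemma val_add_eq (ν : K → EReal)
    (hνadd : ∀ a b : K, min (ν a) (ν b) ≤ ν (a + b))
    (x y : K) (h : ν y < ν x) : ν (x + y) = ν y := by
  have h1 : ν y ≤ ν (x + y) := le_trans (by simp [h.le]) (hνadd x y)
  have hxy : (x + y) + x = y := by linear_combination CharTwo.add_self_eq_zero x
  have h2 : min (ν (x + y)) (ν x) ≤ ν y := by
    have := hνadd (x + y) x; rwa [hxy] at this
  refine le_antisymm ?_ h1
  rcases le_or_gt (ν (x + y)) (ν x) with hle | hlt
  · rwa [min_eq_left hle] at h2
  · rw [min_eq_right hlt.le] at h2; exact absurd h2 (not_le.mpr h)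

/-- The valuation of the Suzuki norm: `ν(θt·t² + st + θs) = min(ν(θt·t²), ν(θs))`. -/
private lemma key_val (θ : K →+* K) (hθ : ∀ x, θ (θ x) = x ^ 2)
    (ν : K → EReal) (hν0 : ν 0 = ⊤)
    (hνtop : ∀ x : K, x ≠ 0 → ν x ≠ ⊤) (hνbot : ∀ x : K, ν x ≠ ⊥)
    (hνmul : ∀ a b : K, ν (a * b) = ν a + ν b)
    (hνadd : ∀ a b : K, min (ν a) (ν b) ≤ ν (a + b))
    (hνθ : ∀ x : K, ν (θ x) = ((Real.sqrt 2 : ℝ) : EReal) * ν x)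
    (s t : K) :
    ν (θ t * t ^ 2 + s * t + θ s) = min (ν (θ t * t ^ 2)) (ν (θ s)) := by
  by_cases ht : t = 0
  · simp [ht, hν0, map_zero]
  by_cases hs : s = 0
  · simp [hs, hν0, map_zero]
  set q : ℝ := Real.sqrt 2 with hqdef
  have hq : q * q = 2 := Real.mul_self_sqrt (by norm_num)
  have hq0 : (0:ℝ) < q := Real.sqrt_pos.mpr (by norm_num)
  obtain ⟨a, ha⟩ : ∃ a : ℝ, ν s = a := ⟨(ν s).toReal, (EReal.coe_toReal (hνtop s hs) (hνbot s)).symm⟩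
  obtain ⟨b, hb⟩ : ∃ b : ℝ, ν t = b := ⟨(ν t).toReal, (EReal.coe_toReal (hνtop t ht) (hνbot t)).symm⟩
  have hA : ν (θ s) = ((q * a : ℝ) : EReal) := by
    rw [hνθ, ha, ← EReal.coe_mul]
  have hB : ν (θ t * t ^ 2) = ((q * b + (b + b) : ℝ) : EReal) := by
    rw [hνmul, hνθ, sq, hνmul, hb, ← EReal.coe_mul, ← EReal.coe_add, ← EReal.coe_add]
  have hC : ν (s * t) = ((a + b : ℝ) : EReal) := by
    rw [hνmul, ha, hb, ← EReal.coe_add]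
  rcases lt_trichotomy (q * b + (b + b)) (q * a) with hlt | heq | hgt
  · -- νT1 < νT3, and νT1 < νT2
    have hT2 : (q * b + (b + b) : ℝ) < a + b := by
      by_contra hcon
      push_neg at hcon
      rcases lt_or_eq_of_le hcon with hcon | hcon
      · exact absurd (raux1 q a b hq hq0 hcon) (not_lt.mpr hlt.le)
      · -- a + b = q*b + 2b forces q*a = q*b + 2b
        have key : a = q * b + b := by linarith
        have : q * a = q * b + (b + b) := by linear_combination q * key + b * hq
        exact absurd this (ne_of_gt hlt)
    have h1 : ν (θ t * t ^ 2 + s * t) = ν (θ t * t ^ 2) := by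
      rw [add_comm]
      exact val_add_eq ν hνadd (s * t) (θ t * t ^ 2)
        (by rw [hB, hC]; exact_mod_cast hT2)
    have h2 : ν (θ t * t ^ 2 + s * t + θ s) = ν (θ t * t ^ 2 + s * t) := by
      rw [add_comm (θ t * t ^ 2 + s * t) (θ s)]
      exact val_add_eq ν hνadd (θ s) (θ t * t ^ 2 + s * t)
        (by rw [h1, hB, hA]; exact_mod_cast hlt)
    rw [h2, h1, min_eq_left]
    rw [hB, hA]; exact_mod_cast hlt.le
  · -- all three valuations equal; show no cancellation can raise the valuation
    have hT2 : (a + b : ℝ) = q * a := by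
      rcases lt_trichotomy (a + b) (q * a) with h | h | h
      · exact absurd (raux2 q a b hq hq0 h) (ne_of_lt · heq)
      · exact h
      · exfalso
        have key : q * b + b < a := by linarith
        have e := mul_lt_mul_of_pos_left key hq0
        have e' : q * (q * b + b) = q * b + (b + b) := by linear_combination b * hq
        linarith
    have hge : ((q * a : ℝ) : EReal) ≤ ν (θ t * t ^ 2 + s * t + θ s) := by
      have h12 : ((q * a : ℝ) : EReal) ≤ min (ν (θ t * t ^ 2)) (ν (s * t)) :=
        le_min (by rw [hB, heq]) (by rw [hC, hT2])
      exact le_trans (le_min (le_trans h12 (hνadd _ _)) (le_of_eq hA.symm)) (hνadd _ _)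
    have hle : ν (θ t * t ^ 2 + s * t + θ s) ≤ ((q * a : ℝ) : EReal) := by
      by_contra hcon
      push_neg at hcon
      set Rv : K := θ t * t ^ 2 + s * t + θ s with hRv
      have hid : s * (Rv + θ s) = t * (θ Rv + θ t * Rv) := by
        rw [hRv]
        simp only [map_add, map_mul, map_pow, hθ]
        have h2 : (2:K) = 0 := CharTwo.two_eq_zero
        linear_combination (s * θ s - t ^ 3 * (θ t) ^ 2 - t * θ s * θ t) * h2
      by_cases hR0 : Rv = 0
      · rw [hR0, map_zero, mul_zero, add_zero, mul_zero, zero_add] at hid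
        rcases mul_eq_zero.mp hid with h | h
        · exact hs h
        · exact hs ((map_eq_zero θ).mp h)
      obtain ⟨r, hr⟩ : ∃ r : ℝ, ν Rv = r :=
        ⟨(ν Rv).toReal, (EReal.coe_toReal (hνtop Rv hR0) (hνbot Rv)).symm⟩
      have hrgt : q * a < r := by rw [hr] at hcon; exact_mod_cast hcon
      have hsum : ν (Rv + θ s) = ν (θ s) :=
        val_add_eq ν hνadd Rv (θ s) (by rw [hA, hr]; exact_mod_cast hrgt)
      have hL : ν (s * (Rv + θ s)) = ((a + q * a : ℝ) : EReal) := by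
        rw [hνmul, hsum, hA, ha, ← EReal.coe_add]
      have hRbound : ((b + min (q * r) (q * b + r) : ℝ) : EReal) ≤ ν (t * (θ Rv + θ t * Rv)) := by
        rw [hνmul, hb]
        have h1 : ((min (q * r) (q * b + r) : ℝ) : EReal) ≤ ν (θ Rv + θ t * Rv) := by
          refine le_trans ?_ (hνadd _ _)
          rw [ereal_coe_min]
          refine min_le_min ?_ ?_
          · rw [hνθ, hr, ← EReal.coe_mul]
          · rw [hνmul, hνθ, hb, hr, ← EReal.coe_mul, ← EReal.coe_add]
        rw [EReal.coe_add]
        exact add_le_add_right h1 _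
      rw [← hid, hL] at hRbound
      have hfin : (b + min (q * r) (q * b + r) : ℝ) ≤ a + q * a := by exact_mod_cast hRbound
      rcases le_total (q * r) (q * b + r) with hm | hm
      · rw [min_eq_left hm] at hfin
        have e := mul_lt_mul_of_pos_left hrgt hq0
        have e' : q * (q * a) = 2 * a := by linear_combination a * hq
        rw [e'] at e
        linarith
      · rw [min_eq_right hm] at hfin
        linarith
    rw [le_antisymm hle hge, hA, hB, heq]
    simp
  · -- νT3 < νT1, and νT3 < νT2
    have hT2 : (q * a : ℝ) < a + b := by
      by_contra hcon
      push_neg at hcon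
      rcases lt_or_eq_of_le hcon with hcon | hcon
      · exact absurd (raux2 q a b hq hq0 hcon) (not_lt.mpr hgt.le)
      · have key : b = q * a - a := by linarith
        have : q * b + (b + b) = q * a := by linear_combination (q + 2) * key + a * hq
        exact absurd this (ne_of_gt hgt)
    have h1 : ν (θ s) < ν (θ t * t ^ 2 + s * t) := by
      refine lt_of_lt_of_le ?_ (hνadd _ _)
      rw [hA, hB, hC, lt_min_iff]
      exact ⟨by exact_mod_cast hgt, by exact_mod_cast hT2⟩
    have h2 : ν (θ t * t ^ 2 + s * t + θ s) = ν (θ s) :=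
      val_add_eq ν hνadd (θ t * t ^ 2 + s * t) (θ s) h1
    rw [h2, min_eq_right]
    rw [hB, hA]; exact_mod_cast hgt.le

end Aux

theorem stmt9 {K : Type*} [Field K] [CharP K 2]
    (θ : K →+* K) (hθ : ∀ x, θ (θ x) = x ^ 2)
    (ν : K → EReal) (hν0 : ν 0 = ⊤)
    (hνtop : ∀ x : K, x ≠ 0 → ν x ≠ ⊤) (hνbot : ∀ x : K, ν x ≠ ⊥)
    (hνmul : ∀ a b : K, ν (a * b) = ν a + ν b)
    (hνadd : ∀ a b : K, min (ν a) (ν b) ≤ ν (a + b))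
    (hνθ : ∀ x : K, ν (θ x) = ((Real.sqrt 2 : ℝ) : EReal) * ν x)
    (R : K → K → K) (hR : ∀ a b, R a b = θ b * b ^ 2 + a * b + θ a)
    (s t u v : K) :
    min (ν (R s t)) (ν (R u v)) ≤ ν (R (s + u + θ t * v) (t + v)) := by
  have hq : Real.sqrt 2 * Real.sqrt 2 = 2 := Real.mul_self_sqrt (by norm_num)
  have hq0 : (0:ℝ) < Real.sqrt 2 := Real.sqrt_pos.mpr (by norm_num)
  rw [hR, hR, hR]
  -- the group-law expansion of the norm, in characteristic 2
  have hexp : θ (t + v) * (t + v) ^ 2 + (s + u + θ t * v) * (t + v) + θ (s + u + θ t * v)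
      = (θ t * t ^ 2 + s * t + θ s) + ((θ v * v ^ 2 + u * v + θ u)
          + (s * v + (u * t + θ t * t * v))) := by
    simp only [map_add, map_mul, hθ]
    have h2 : (2:K) = 0 := CharTwo.two_eq_zero
    linear_combination (θ t * v ^ 2 + θ v * t ^ 2 + θ t * t * v + θ v * t * v) * h2
  rw [hexp]
  set m : EReal := min (ν (θ t * t ^ 2 + s * t + θ s)) (ν (θ v * v ^ 2 + u * v + θ u)) with hm
  have step : ∀ x y : K, m ≤ ν x → m ≤ ν y → m ≤ ν (x + y) :=
    fun x y hx hy => le_trans (le_min hx hy) (hνadd x y)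
  have hkey1 := key_val θ hθ ν hν0 hνtop hνbot hνmul hνadd hνθ s t
  have hkey2 := key_val θ hθ ν hν0 hνtop hνbot hνmul hνadd hνθ u v
  -- generic bound for the mixed terms of type x*y
  have cross1 : ∀ x y : K, min (ν (θ x)) (ν (θ y * y ^ 2)) ≤ ν (x * y) := by
    intro x y
    by_cases hx : x = 0
    · simp [hx, hν0]
    by_cases hy : y = 0
    · simp [hy, hν0]
    obtain ⟨a, ha⟩ : ∃ a : ℝ, ν x = a := ⟨(ν x).toReal, (EReal.coe_toReal (hνtop x hx) (hνbot x)).symm⟩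
    obtain ⟨b, hb⟩ : ∃ b : ℝ, ν y = b := ⟨(ν y).toReal, (EReal.coe_toReal (hνtop y hy) (hνbot y)).symm⟩
    have h1 : ν (θ x) = ((Real.sqrt 2 * a : ℝ) : EReal) := by rw [hνθ, ha, ← EReal.coe_mul]
    have h2 : ν (θ y * y ^ 2) = ((Real.sqrt 2 * b + (b + b) : ℝ) : EReal) := by
      rw [hνmul, hνθ, sq, hνmul, hb, ← EReal.coe_mul, ← EReal.coe_add, ← EReal.coe_add]
    have h3 : ν (x * y) = ((a + b : ℝ) : EReal) := by rw [hνmul, ha, hb, ← EReal.coe_add]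
    rw [h1, h2, h3, ← ereal_coe_min, EReal.coe_le_coe_iff]
    exact rmin (Real.sqrt 2) a b hq hq0
  -- bound for the term θt·t·v
  have cross2 : min (ν (θ t * t ^ 2)) (ν (θ v * v ^ 2)) ≤ ν (θ t * t * v) := by
    by_cases ht : t = 0
    · simp [ht, hν0, map_zero]
    by_cases hv : v = 0
    · simp [hv, hν0]
    obtain ⟨b, hb⟩ : ∃ b : ℝ, ν t = b := ⟨(ν t).toReal, (EReal.coe_toReal (hνtop t ht) (hνbot t)).symm⟩
    obtain ⟨c, hc⟩ : ∃ c : ℝ, ν v = c := ⟨(ν v).toReal, (EReal.coe_toReal (hνtop v hv) (hνbot v)).symm⟩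
    have h1 : ν (θ t * t ^ 2) = ((Real.sqrt 2 * b + (b + b) : ℝ) : EReal) := by
      rw [hνmul, hνθ, sq, hνmul, hb, ← EReal.coe_mul, ← EReal.coe_add, ← EReal.coe_add]
    have h2 : ν (θ v * v ^ 2) = ((Real.sqrt 2 * c + (c + c) : ℝ) : EReal) := by
      rw [hνmul, hνθ, sq, hνmul, hc, ← EReal.coe_mul, ← EReal.coe_add, ← EReal.coe_add]
    have h3 : ν (θ t * t * v) = ((Real.sqrt 2 * b + b + c : ℝ) : EReal) := by
      rw [hνmul, hνmul, hνθ, hb, hc, ← EReal.coe_mul, ← EReal.coe_add, ← EReal.coe_add]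
    rw [h1, h2, h3, ← ereal_coe_min, EReal.coe_le_coe_iff]
    rcases le_total b c with hbc | hbc
    · rw [min_eq_left (by nlinarith [mul_le_mul_of_nonneg_left hbc hq0.le])]
      linarith
    · rw [min_eq_right (by nlinarith [mul_le_mul_of_nonneg_left hbc hq0.le])]
      nlinarith [mul_le_mul_of_nonneg_left hbc hq0.le]
  refine step _ _ (min_le_left _ _) (step _ _ (min_le_right _ _) ?_)
  have hm1 : m ≤ ν (θ t * t ^ 2) := le_trans (min_le_left _ _) (hkey1 ▸ min_le_left _ _)
  have hm2 : m ≤ ν (θ s) := le_trans (min_le_left _ _) (hkey1 ▸ min_le_right _ _)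
  have hm3 : m ≤ ν (θ v * v ^ 2) := le_trans (min_le_right _ _) (hkey2 ▸ min_le_left _ _)
  have hm4 : m ≤ ν (θ u) := le_trans (min_le_right _ _) (hkey2 ▸ min_le_right _ _)
  refine step _ _ ?_ (step _ _ ?_ ?_)
  · exact le_trans (le_min hm2 hm3) (cross1 s v)
  · exact le_trans (le_min hm4 hm1) (cross1 u t)
  · exact le_trans (le_min hm1 hm3) cross2
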